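/- With the equilibrium quantities q_f = (1/(2β))[α − C̄ − (1 + κ)(C_f − C̄)] and r_f = (κ/β)(C_f − C̄): the aggregate consumer surplus Σ_f (β/2)(q_f + r_f)² equals (1/(8β))[n(α − C̄)² + (κ − 1)²·n·σ_C²]; the aggregate producer surplus Σ_f (α − C_f − β(q_f + r_f))·q_f equals (1/(4β))[n(α − C̄)² + (κ + 1)²·n·σ_C²]; and the merchandising surplus −β·Σ_f (q_f + r_f)·r_f equals −(1/(2β))κ(κ − 1)·n·σ_C². -/

import Mathlib

/-- Surplus decomposition at the networked Cournot equilibrium: formulas for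
aggregate consumer surplus, aggregate producer surplus, and merchandising surplus. -/
theorem stmt15 {n : ℕ} (α β κ : ℝ) (hβ : 0 < β) (C : Fin n → ℝ) :
    let Cbar : ℝ := (1 / (n : ℝ)) * ∑ g, C g
    let σsq : ℝ := (1 / (n : ℝ)) * ∑ g, (C g - Cbar) ^ 2
    let q : Fin n → ℝ := fun f => (1 / (2 * β)) * (α - Cbar - (1 + κ) * (C f - Cbar))
    let r : Fin n → ℝ := fun f => (κ / β) * (C f - Cbar)
    (∑ f, (β / 2) * (q f + r f) ^ 2
        = (1 / (8 * β)) * ((n : ℝ) * (α - Cbar) ^ 2 + (κ - 1) ^ 2 * (n : ℝ) * σsq)) ∧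
    (∑ f, (α - C f - β * (q f + r f)) * q f
        = (1 / (4 * β)) * ((n : ℝ) * (α - Cbar) ^ 2 + (κ + 1) ^ 2 * (n : ℝ) * σsq)) ∧
    (-(β * ∑ f, (q f + r f) * r f)
        = -(1 / (2 * β)) * (κ * (κ - 1)) * (n : ℝ) * σsq) := by
  intro Cbar σsq q r
  have hβ' : β ≠ 0 := ne_of_gt hβ
  have hS2 : ∑ g, (C g - Cbar) ^ 2 = (n : ℝ) * σsq := by
    rcases Nat.eq_zero_or_pos n with h | h
    · have h0 : (n : ℝ) = 0 := by simp [h]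
      rw [h0, zero_mul]
      exact Finset.sum_eq_zero fun g _ => absurd g.2 (by omega)
    · have hn : (n : ℝ) ≠ 0 := Nat.cast_ne_zero.mpr h.ne'
      show _ = (n : ℝ) * ((1 / (n : ℝ)) * _)
      field_simp
  have hS1 : ∑ g, (C g - Cbar) = 0 := by
    rcases Nat.eq_zero_or_pos n with h | h
    · exact Finset.sum_eq_zero fun g _ => absurd g.2 (by omega)
    · have hn : (n : ℝ) ≠ 0 := Nat.cast_ne_zero.mpr h.ne'
      have h1 : ∑ g, (C g - Cbar) = (∑ g, C g) - (n : ℝ) * Cbar := by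
        rw [Finset.sum_sub_distrib, Finset.sum_const]
        simp [mul_comm]
      rw [h1]
      show (∑ g, C g) - (n : ℝ) * ((1 / (n : ℝ)) * ∑ g, C g) = 0
      field_simp
      ring
  have key : ∀ a b c : ℝ,
      ∑ f, (a + b * (C f - Cbar) + c * (C f - Cbar) ^ 2)
        = (n : ℝ) * a + c * ((n : ℝ) * σsq) := by
    intro a b c
    rw [Finset.sum_add_distrib, Finset.sum_add_distrib, Finset.sum_const,
      ← Finset.mul_sum, ← Finset.mul_sum, hS1, hS2]
    simp [mul_comm]
  clear_value Cbar σsq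
  refine ⟨?_, ?_, ?_⟩
  · have hk := key ((1 / (8 * β)) * (α - Cbar) ^ 2)
      ((κ - 1) / (4 * β) * (α - Cbar)) ((κ - 1) ^ 2 / (8 * β))
    calc ∑ f, (β / 2) * (q f + r f) ^ 2
        = ∑ f, ((1 / (8 * β)) * (α - Cbar) ^ 2
            + (κ - 1) / (4 * β) * (α - Cbar) * (C f - Cbar)
            + (κ - 1) ^ 2 / (8 * β) * (C f - Cbar) ^ 2) :=
          Finset.sum_congr rfl fun f _ => by
            show (β / 2) * ((1 / (2 * β)) * (α - Cbar - (1 + κ) * (C f - Cbar))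
              + (κ / β) * (C f - Cbar)) ^ 2 = _
            field_simp
            ring
      _ = _ := by rw [hk]; ring
  · have hk := key ((1 / (4 * β)) * (α - Cbar) ^ 2)
      (-(κ + 1) / (2 * β) * (α - Cbar)) ((κ + 1) ^ 2 / (4 * β))
    calc ∑ f, (α - C f - β * (q f + r f)) * q f
        = ∑ f, ((1 / (4 * β)) * (α - Cbar) ^ 2
            + (-(κ + 1) / (2 * β) * (α - Cbar)) * (C f - Cbar)
            + (κ + 1) ^ 2 / (4 * β) * (C f - Cbar) ^ 2) :=
          Finset.sum_congr rfl fun f _ => by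
            show (α - C f - β * ((1 / (2 * β)) * (α - Cbar - (1 + κ) * (C f - Cbar))
              + (κ / β) * (C f - Cbar)))
              * ((1 / (2 * β)) * (α - Cbar - (1 + κ) * (C f - Cbar))) = _
            have h1 : α - C f = (α - Cbar) - (C f - Cbar) := by ring
            rw [h1]
            field_simp
            ring
      _ = _ := by rw [hk]; ring
  · have hk := key 0 (κ / (2 * β ^ 2) * (α - Cbar)) (κ * (κ - 1) / (2 * β ^ 2))
    have h2 : ∑ f, (q f + r f) * r f
        = ∑ f, (0 + κ / (2 * β ^ 2) * (α - Cbar) * (C f - Cbar)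
            + κ * (κ - 1) / (2 * β ^ 2) * (C f - Cbar) ^ 2) :=
      Finset.sum_congr rfl fun f _ => by
        show ((1 / (2 * β)) * (α - Cbar - (1 + κ) * (C f - Cbar))
          + (κ / β) * (C f - Cbar)) * ((κ / β) * (C f - Cbar)) = _
        field_simp
        ring
    rw [h2, hk]
    field_simp
    ring
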